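/- Let f ∈ C¹([0,1]) with f(0) = 0 and u = f′ ∈ L²(0,1). Then the regularized solutions u_α = (αI + A)⁻¹ f converge to u in L²(0,1) as α → 0⁺, where A is the Volterra operator. -/

import Mathlib

open MeasureTheory intervalIntegral Real Filter
open Set

lemma expG_cont {G : ℝ → ℝ} (hG : ContinuousOn G (Icc 0 1)) (c : ℝ) :
    ContinuousOn (fun s => exp (s / c) * G s) (Icc 0 1) :=
  ((Real.continuous_exp.comp (continuous_id.div_const c)).continuousOn).mul hG

lemma expG_intInt {G : ℝ → ℝ} (hG : ContinuousOn G (Icc 0 1)) {x : ℝ} (hx : x ∈ Icc (0:ℝ) 1)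
    (c : ℝ) : IntervalIntegrable (fun s => exp (s / c) * G s) volume 0 x :=
  ((expG_cont hG c).mono (by rw [uIcc_of_le hx.1]; exact Icc_subset_Icc le_rfl hx.2)).intervalIntegrable

lemma exp_int {α : ℝ} (hα : α ≠ 0) (x : ℝ) :
    ∫ s in (0:ℝ)..x, exp (s / α) = α * (exp (x / α) - 1) := by
  rw [intervalIntegral.integral_comp_div (f := Real.exp) hα, integral_exp]
  simp [smul_eq_mul, mul_sub]

lemma ftc_identity {f : ℝ → ℝ} (hf : ContDiffOn ℝ 1 f (Icc 0 1)) (hf0 : f 0 = 0)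
    {α x : ℝ} (hα : 0 < α) (hx : x ∈ Icc (0:ℝ) 1) :
    ∫ s in (0:ℝ)..x, exp (s / α) * f s
      = α * (exp (x / α) * f x) - α * ∫ s in (0:ℝ)..x, exp (s / α) * derivWithin f (Icc 0 1) s := by
  set G := derivWithin f (Icc 0 1) with hG
  have hGc : ContinuousOn G (Icc 0 1) := hf.continuousOn_derivWithin (uniqueDiffOn_Icc one_pos) le_rfl
  have hfc : ContinuousOn f (Icc 0 1) := hf.continuousOn
  have hfx : ContinuousOn f (Icc 0 x) := hfc.mono (Icc_subset_Icc le_rfl hx.2)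
  have hcont : ContinuousOn (fun s => exp (s / α) * f s) (Icc 0 x) :=
    ((Real.continuous_exp.comp (continuous_id.div_const α)).continuousOn).mul hfx
  have hder : ∀ s ∈ Ioo (0:ℝ) x, HasDerivAt (fun s => exp (s / α) * f s)
      (α⁻¹ * (exp (s / α) * f s) + exp (s / α) * G s) s := by
    intro s hs
    have hsI : Icc (0:ℝ) 1 ∈ nhds s :=
      Icc_mem_nhds hs.1 (lt_of_lt_of_le hs.2 hx.2)
    have hdf : DifferentiableWithinAt ℝ f (Icc 0 1) s :=
      (hf.differentiableOn one_ne_zero) s (Ioo_subset_Icc_self (Ioo_subset_Ioo le_rfl hx.2 hs))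
    have hda : DifferentiableAt ℝ f s := hdf.differentiableAt hsI
    have hGs : G s = deriv f s := derivWithin_of_mem_nhds hsI
    have h1 : HasDerivAt (fun s : ℝ => exp (s / α)) (exp (s / α) * (1 / α)) s :=
      ((hasDerivAt_id s).div_const α).exp
    have h2 : HasDerivAt f (G s) s := hGs ▸ hda.hasDerivAt
    have := h1.mul h2
    convert this using 1 <;> first | rfl | ring
  have hint : IntervalIntegrable (fun s => α⁻¹ * (exp (s / α) * f s) + exp (s / α) * G s)
      volume 0 x := by
    apply ContinuousOn.intervalIntegrable
    rw [uIcc_of_le hx.1]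
    exact (continuousOn_const.mul hcont).add
      ((expG_cont hGc α).mono (Icc_subset_Icc le_rfl hx.2))
  have hFTC := integral_eq_sub_of_hasDerivAt_of_le hx.1 hcont hder hint
  rw [hf0, mul_zero, sub_zero] at hFTC
  have hif : IntervalIntegrable (fun s => exp (s / α) * f s) volume 0 x := by
    apply ContinuousOn.intervalIntegrable; rwa [uIcc_of_le hx.1]
  have hi1 : IntervalIntegrable (fun s => α⁻¹ * (exp (s / α) * f s)) volume 0 x :=
    hif.const_mul _
  have hi2 : IntervalIntegrable (fun s => exp (s / α) * G s) volume 0 x := expG_intInt hGc hx α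
  rw [intervalIntegral.integral_add hi1 hi2, intervalIntegral.integral_const_mul] at hFTC
  have hα' : α ≠ 0 := ne_of_gt hα
  field_simp at hFTC ⊢
  linarith [hFTC]

noncomputable def Kfun (G : ℝ → ℝ) (α x : ℝ) : ℝ :=
  α⁻¹ * Real.exp (-x / α) * (∫ s in (0:ℝ)..x, Real.exp (s / α) * G s) - G x

lemma pointwise_eq {f : ℝ → ℝ} (hf : ContDiffOn ℝ 1 f (Icc 0 1)) (hf0 : f 0 = 0)
    {α x : ℝ} (hα : 0 < α) (hx : x ∈ Ioo (0:ℝ) 1) :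
    (f x / α - α⁻¹ ^ 2 * exp (-x / α) * ∫ s in (0:ℝ)..x, exp (s / α) * f s)
        - deriv f x = Kfun (derivWithin f (Icc 0 1)) α x := by
  have hxI : Icc (0:ℝ) 1 ∈ nhds x := Icc_mem_nhds hx.1 hx.2
  have hd : deriv f x = derivWithin f (Icc 0 1) x := (derivWithin_of_mem_nhds hxI).symm
  rw [ftc_identity hf hf0 hα (Ioo_subset_Icc_self hx), hd, Kfun]
  have hα' : α ≠ 0 := ne_of_gt hα
  have h1 : exp (-x / α) * exp (x / α) = 1 := by
    rw [← Real.exp_add]; ring_nf; exact Real.exp_zero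
  set P := exp (-x / α); set Q := exp (x / α)
  set I := ∫ s in (0:ℝ)..x, exp (s / α) * derivWithin f (Icc 0 1) s
  field_simp
  linear_combination (-(f x)) * h1

lemma K_split {G : ℝ → ℝ} (hG : ContinuousOn G (Icc 0 1)) {α x : ℝ} (hα : 0 < α)
    (hx : x ∈ Ioc (0:ℝ) 1) :
    Kfun G α x = α⁻¹ * exp (-x / α) * (∫ s in (0:ℝ)..x, exp (s / α) * (G s - G x))
      - exp (-x / α) * G x := by
  have hα' : α ≠ 0 := ne_of_gt hα
  have hxI : x ∈ Icc (0:ℝ) 1 := Ioc_subset_Icc_self hx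
  have hconst : IntervalIntegrable (fun s => exp (s / α) * G x) volume 0 x := by
    apply ContinuousOn.intervalIntegrable
    exact ((Real.continuous_exp.comp (continuous_id.div_const α)).continuousOn).mul
      continuousOn_const
  have e1 : ∫ s in (0:ℝ)..x, exp (s / α) * (G s - G x)
      = (∫ s in (0:ℝ)..x, exp (s / α) * G s) - (∫ s in (0:ℝ)..x, exp (s / α)) * G x := by
    have : (fun s => exp (s / α) * (G s - G x))
        = fun s => exp (s / α) * G s - exp (s / α) * G x := by funext s; ring
    rw [this, intervalIntegral.integral_sub (expG_intInt hG hxI α) hconst,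
      intervalIntegral.integral_mul_const]
  rw [Kfun, e1, exp_int hα']
  have h1 : exp (-x / α) * exp (x / α) = 1 := by
    rw [← Real.exp_add]; ring_nf; exact Real.exp_zero
  field_simp
  simp only [div_eq_mul_inv, neg_mul] at h1 ⊢
  linear_combination (α * G x) * h1

lemma K_unif {G : ℝ → ℝ} (hG : ContinuousOn G (Icc 0 1)) {M : ℝ}
    (hM : ∀ s ∈ Icc (0:ℝ) 1, |G s| ≤ M) {α x : ℝ} (hα : 0 < α) (hx : x ∈ Ioc (0:ℝ) 1) :
    |Kfun G α x| ≤ 2 * M := by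
  have hM0 : 0 ≤ M := le_trans (abs_nonneg _) (hM 0 (by norm_num))
  have hxI : x ∈ Icc (0:ℝ) 1 := Ioc_subset_Icc_self hx
  have hα' : α ≠ 0 := ne_of_gt hα
  set P := exp (-x / α) with hPdef
  set Q := exp (x / α) with hQdef
  have h1 : P * Q = 1 := by rw [hPdef, hQdef, ← Real.exp_add]; ring_nf; exact Real.exp_zero
  have hP0 : 0 < P := Real.exp_pos _
  have hP1 : P ≤ 1 := Real.exp_le_one_iff.mpr (by
    apply div_nonpos_of_nonpos_of_nonneg <;> linarith [hx.1])
  have hQ1 : 1 ≤ Q := Real.one_le_exp (div_nonneg hx.1.le hα.le)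
  have hI : |∫ s in (0:ℝ)..x, exp (s / α) * G s| ≤ M * (α * (Q - 1)) := by
    have hb : IntervalIntegrable (fun s => M * exp (s / α)) volume 0 x :=
      (continuous_const.mul (Real.continuous_exp.comp (continuous_id.div_const α))).intervalIntegrable 0 x
    have hae : ∀ᵐ t ∂(volume.restrict (Set.uIoc (0:ℝ) x)), ‖exp (t / α) * G t‖ ≤ M * exp (t / α) := by
      refine (ae_restrict_iff' measurableSet_uIoc).mpr (ae_of_all _ fun t ht => ?_)
      rw [uIoc_of_le hx.1.le] at ht
      have htI : t ∈ Icc (0:ℝ) 1 := ⟨ht.1.le, le_trans ht.2 hxI.2⟩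
      rw [Real.norm_eq_abs, abs_mul, abs_of_pos (Real.exp_pos _)]
      calc exp (t / α) * |G t| ≤ exp (t / α) * M :=
            mul_le_mul_of_nonneg_left (hM t htI) (Real.exp_pos _).le
        _ = M * exp (t / α) := by ring
    have := intervalIntegral.norm_integral_le_of_norm_le hx.1.le
      ((ae_restrict_iff' measurableSet_Ioc).mp (by rwa [uIoc_of_le hx.1.le] at hae)) hb
    rw [intervalIntegral.integral_const_mul, exp_int hα', ← hQdef] at this
    have hnn : 0 ≤ M * (α * (Q - 1)) := mul_nonneg hM0 (mul_nonneg hα.le (sub_nonneg.mpr hQ1))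
    rwa [Real.norm_eq_abs] at this
  have habs : |Kfun G α x| ≤ α⁻¹ * P * |∫ s in (0:ℝ)..x, exp (s / α) * G s| + |G x| := by
    rw [Kfun]
    refine le_trans (abs_sub _ _) ?_
    rw [abs_mul, abs_mul, abs_of_nonneg (by positivity : (0:ℝ) ≤ α⁻¹), abs_of_pos hP0]
  have key : α⁻¹ * P * |∫ s in (0:ℝ)..x, exp (s / α) * G s| ≤ M * (1 - P) := by
    have h2 := mul_le_mul_of_nonneg_left hI (by positivity : (0:ℝ) ≤ α⁻¹ * P)
    have h3 : α⁻¹ * P * (M * (α * (Q - 1))) = M * (P * Q) - M * P := by field_simp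
    rw [h3, h1] at h2; linarith
  have hGx : |G x| ≤ M := hM x hxI
  nlinarith

lemma K_eps {G : ℝ → ℝ} (hG : ContinuousOn G (Icc 0 1)) {M ε δ : ℝ}
    (hM : ∀ s ∈ Icc (0:ℝ) 1, |G s| ≤ M) (hδ : 0 < δ)
    {α x : ℝ} (hα : 0 < α) (hx : x ∈ Ioc (0:ℝ) 1)
    (hεδ : ∀ s ∈ Icc (0:ℝ) 1, |s - x| ≤ δ → |G s - G x| ≤ ε) :
    |Kfun G α x| ≤ ε + 2 * M * exp (-δ / α) / α + exp (-x / α) * M := by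
  have hM0 : 0 ≤ M := le_trans (abs_nonneg _) (hM 0 (by norm_num))
  have hxI : x ∈ Icc (0:ℝ) 1 := Ioc_subset_Icc_self hx
  have hα' : α ≠ 0 := ne_of_gt hα
  have hε0 : 0 ≤ ε := le_trans (abs_nonneg _) (hεδ x hxI (by simp [hδ.le]))
  rw [K_split hG hα hx]
  set P := exp (-x / α) with hPdef
  set Q := exp (x / α) with hQdef
  set R := exp (-δ / α) with hRdef
  set S := exp ((x - δ) / α) with hSdef
  have h1 : P * Q = 1 := by rw [hPdef, hQdef, ← Real.exp_add]; ring_nf; exact Real.exp_zero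
  have h2 : P * S = R := by rw [hPdef, hSdef, hRdef, ← Real.exp_add]; congr 1; ring
  have hP0 : 0 < P := Real.exp_pos _
  have hQ1 : 1 ≤ Q := Real.one_le_exp (div_nonneg hx.1.le hα.le)
  have hS0 : 0 < S := Real.exp_pos _
  have hR0 : 0 < R := Real.exp_pos _
  set A := ∫ s in (0:ℝ)..x, exp (s / α) * (G s - G x) with hAdef
  have hA : |A| ≤ ε * (α * (Q - 1)) + 2 * M * S * x := by
    have hb : IntervalIntegrable (fun s => ε * exp (s / α) + 2 * M * S) volume 0 x :=
      ((continuous_const.mul (Real.continuous_exp.comp (continuous_id.div_const α))).add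
        continuous_const).intervalIntegrable 0 x
    have hae : ∀ᵐ t ∂(volume.restrict (Set.uIoc (0:ℝ) x)),
        ‖exp (t / α) * (G t - G x)‖ ≤ ε * exp (t / α) + 2 * M * S := by
      refine (ae_restrict_iff' measurableSet_uIoc).mpr (ae_of_all _ fun t ht => ?_)
      rw [uIoc_of_le hx.1.le] at ht
      have htI : t ∈ Icc (0:ℝ) 1 := ⟨ht.1.le, le_trans ht.2 hxI.2⟩
      rw [Real.norm_eq_abs, abs_mul, abs_of_pos (Real.exp_pos _)]
      rcases le_or_gt (x - t) δ with hcase | hcase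
      · have hd : |G t - G x| ≤ ε := hεδ t htI (by rw [abs_sub_comm, abs_of_nonneg (by linarith [ht.2])]; exact hcase)
        nlinarith [mul_le_mul_of_nonneg_left hd (Real.exp_pos (t / α)).le,
          mul_nonneg (mul_nonneg (by norm_num : (0:ℝ) ≤ 2) hM0) hS0.le]
      · have hts : exp (t / α) ≤ S := by
          rw [hSdef]; exact Real.exp_le_exp.mpr ((div_le_div_iff_of_pos_right hα).mpr (by linarith))
        have hd : |G t - G x| ≤ 2 * M :=
          le_trans (abs_sub _ _) (by linarith [hM t htI, hM x hxI])
        nlinarith [Real.exp_pos (t / α), abs_nonneg (G t - G x),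
          mul_le_mul hts hd (abs_nonneg _) hS0.le]
    have := intervalIntegral.norm_integral_le_of_norm_le hx.1.le
      ((ae_restrict_iff' measurableSet_Ioc).mp (by rwa [uIoc_of_le hx.1.le] at hae)) hb
    have hcalc : ∫ s in (0:ℝ)..x, (ε * exp (s / α) + 2 * M * S)
        = ε * (α * (Q - 1)) + 2 * M * S * x := by
      have hbe : IntervalIntegrable (fun s => ε * exp (s / α)) volume 0 x :=
        (by fun_prop : Continuous fun s : ℝ => ε * exp (s / α)).intervalIntegrable 0 x
      rw [intervalIntegral.integral_add hbe intervalIntegrable_const,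
        intervalIntegral.integral_const_mul, exp_int hα', intervalIntegral.integral_const]
      rw [← hQdef]
      simp [smul_eq_mul]; ring
    rw [hcalc] at this
    have hnn : 0 ≤ ε * (α * (Q - 1)) + 2 * M * S * x := by
      have := mul_nonneg hε0 (mul_nonneg hα.le (sub_nonneg.mpr hQ1))
      nlinarith [mul_nonneg (mul_nonneg (mul_nonneg (by norm_num : (0:ℝ) ≤ 2) hM0) hS0.le) hx.1.le]
    rwa [Real.norm_eq_abs] at this
  have habs : |α⁻¹ * P * A - P * G x| ≤ α⁻¹ * P * |A| + P * M := by
    refine le_trans (abs_sub _ _) ?_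
    rw [abs_mul, abs_mul, abs_mul, abs_of_nonneg (by positivity : (0:ℝ) ≤ α⁻¹),
      abs_of_pos hP0]
    nlinarith [mul_le_mul_of_nonneg_left (hM x hxI) hP0.le, abs_nonneg A]
  have key : α⁻¹ * P * |A| ≤ ε + 2 * M * R / α := by
    have h4 := mul_le_mul_of_nonneg_left hA (by positivity : (0:ℝ) ≤ α⁻¹ * P)
    have e2 : α⁻¹ * P * (ε * (α * (Q - 1)) + 2 * M * S * x)
        = ε * (P * Q) - ε * P + 2 * M * (P * S) * x / α := by field_simp
    rw [e2, h1, h2] at h4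
    have h5 : 2 * M * R * x / α ≤ 2 * M * R / α := by
      apply (div_le_div_iff_of_pos_right hα).mpr
      nlinarith [mul_nonneg (mul_nonneg hM0 hR0.le) (sub_nonneg.mpr hxI.2)]
    nlinarith [mul_nonneg hε0 hP0.le, h5]
  linarith [habs, key]

lemma tendsto_exp_neg_div {c : ℝ} (hc : 0 < c) :
    Tendsto (fun α : ℝ => exp (-c / α)) (nhdsWithin 0 (Ioi 0)) (nhds 0) := by
  have h1 : Tendsto (fun t : ℝ => c * t) atTop atTop :=
    Tendsto.const_mul_atTop hc tendsto_id
  have h2 := (Real.tendsto_exp_neg_atTop_nhds_zero).comp (h1.comp tendsto_inv_nhdsGT_zero)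
  refine h2.congr fun α => ?_
  simp [Function.comp, neg_div, div_eq_mul_inv]

lemma tendsto_exp_neg_div_div {c : ℝ} (hc : 0 < c) :
    Tendsto (fun α : ℝ => exp (-c / α) / α) (nhdsWithin 0 (Ioi 0)) (nhds 0) := by
  have h0 : Tendsto (fun u : ℝ => u * exp (-u)) atTop (nhds 0) := by
    simpa using Real.tendsto_pow_mul_exp_neg_atTop_nhds_zero 1
  have h1 : Tendsto (fun t : ℝ => c * t) atTop atTop :=
    Tendsto.const_mul_atTop hc tendsto_id
  have h2 := (h0.comp h1).const_mul c⁻¹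
  have h3 : Tendsto (fun t : ℝ => t * exp (-(c * t))) atTop (nhds 0) := by
    have h2' := h2.congr (fun t => by
      simp only [Function.comp]
      rw [← mul_assoc, ← mul_assoc, inv_mul_cancel₀ hc.ne', one_mul])
    simpa using h2'
  have h4 := h3.comp tendsto_inv_nhdsGT_zero
  refine h4.congr fun α => ?_
  simp only [Function.comp, neg_div, div_eq_mul_inv, neg_mul]
  ring

lemma K_tendsto {G : ℝ → ℝ} (hG : ContinuousOn G (Icc 0 1)) {M : ℝ}
    (hM : ∀ s ∈ Icc (0:ℝ) 1, |G s| ≤ M) {x : ℝ} (hx : x ∈ Ioc (0:ℝ) 1) :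
    Tendsto (fun α => Kfun G α x) (nhdsWithin 0 (Ioi 0)) (nhds 0) := by
  rw [Metric.tendsto_nhds]
  intro ε hε
  have hcw : ContinuousWithinAt G (Icc 0 1) x := hG x (Ioc_subset_Icc_self hx)
  rw [Metric.continuousWithinAt_iff] at hcw
  obtain ⟨δ, hδ0, hδ⟩ := hcw (ε/3) (by linarith)
  have hεδ : ∀ s ∈ Icc (0:ℝ) 1, |s - x| ≤ δ/2 → |G s - G x| ≤ ε/3 := by
    intro s hs hsx
    have h := hδ hs (by rw [Real.dist_eq]; linarith)
    rw [Real.dist_eq] at h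
    linarith
  have hr : Tendsto (fun α : ℝ => 2 * M * exp (-(δ/2) / α) / α + exp (-x / α) * M)
      (nhdsWithin 0 (Ioi 0)) (nhds 0) := by
    have t1 := (tendsto_exp_neg_div_div (half_pos hδ0)).const_mul (2 * M)
    have t2 := (tendsto_exp_neg_div hx.1).mul_const M
    simpa [mul_div_assoc] using t1.add t2
  rw [Metric.tendsto_nhds] at hr
  have hre := hr (ε/3) (by linarith)
  have hsm : ∀ᶠ α in nhdsWithin (0:ℝ) (Ioi 0), α ∈ Ioi (0:ℝ) := eventually_mem_nhdsWithin
  filter_upwards [hsm, hre] with α hα1 hα2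
  rw [Real.dist_eq, sub_zero]
  have hb := K_eps hG hM (half_pos hδ0) hα1 hx hεδ
  rw [Real.dist_eq, sub_zero] at hα2
  have h5 : 2 * M * exp (-(δ/2) / α) / α + exp (-x / α) * M
      ≤ |2 * M * exp (-(δ/2) / α) / α + exp (-x / α) * M| := le_abs_self _
  calc |Kfun G α x| ≤ ε/3 + 2 * M * exp (-(δ/2) / α) / α + exp (-x / α) * M := hb
    _ < ε := by linarith

/-- If `f ∈ C¹([0,1])` with `f(0) = 0` and `u = f′`, then the regularized
solutions `u_α = (αI + A)⁻¹ f` (given by the explicit solution formula)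
converge to `u` in `L²(0,1)` as `α → 0⁺`. -/
theorem regularized_solutions_converge
    (f : ℝ → ℝ) (hf : ContDiffOn ℝ 1 f (Set.Icc 0 1)) (hf0 : f 0 = 0) :
    Tendsto (fun α : ℝ =>
        eLpNorm (fun x =>
            (f x / α - α⁻¹ ^ 2 * exp (-x / α) * ∫ s in (0:ℝ)..x, exp (s / α) * f s)
              - deriv f x) 2 (volume.restrict (Set.Ioc 0 1)))
      (nhdsWithin 0 (Set.Ioi 0)) (nhds 0) := by
  set G := derivWithin f (Icc 0 1) with hGdef
  have hGc : ContinuousOn G (Icc 0 1) :=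
    hf.continuousOn_derivWithin (uniqueDiffOn_Icc one_pos) le_rfl
  obtain ⟨M, hM⟩ : ∃ M, ∀ s ∈ Icc (0:ℝ) 1, |G s| ≤ M := by
    obtain ⟨M, hM⟩ := isCompact_Icc.exists_bound_of_continuousOn hGc
    exact ⟨M, fun s hs => (Real.norm_eq_abs _) ▸ hM s hs⟩
  have hM0 : 0 ≤ M := le_trans (abs_nonneg _) (hM 0 (by norm_num))
  set μ := volume.restrict (Ioc (0:ℝ) 1) with hμ
  haveI : IsFiniteMeasure μ := by
    constructor
    rw [hμ, Measure.restrict_apply_univ]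
    exact measure_Ioc_lt_top
  have hae_mem : ∀ᵐ x ∂μ, x ∈ Ioc (0:ℝ) 1 := ae_restrict_mem measurableSet_Ioc
  have hae_ne : ∀ᵐ x ∂μ, x ≠ 1 := by
    refine ae_restrict_of_ae ?_
    have hset : {x : ℝ | ¬ x ≠ 1} = {1} := by ext y; simp
    rw [ae_iff, hset]
    simp
  have hKc : ∀ α : ℝ, ContinuousOn (Kfun G α) (Icc 0 1) := by
    intro α
    have hint : IntegrableOn (fun s => exp (s / α) * G s) (uIcc (0:ℝ) 1) volume := by
      rw [uIcc_of_le zero_le_one]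
      exact (expG_cont hGc α).integrableOn_Icc
    have hprim : ContinuousOn (fun x => ∫ s in (0:ℝ)..x, exp (s / α) * G s) (Icc 0 1) := by
      have := intervalIntegral.continuousOn_primitive_interval hint
      rwa [uIcc_of_le zero_le_one] at this
    exact (((continuous_const.mul
      (Real.continuous_exp.comp (continuous_id.neg.div_const α))).continuousOn).mul hprim).sub hGc
  have hKm : ∀ α : ℝ, AEStronglyMeasurable (Kfun G α) μ := fun α =>
    ((hKc α).mono Ioc_subset_Icc_self).aestronglyMeasurable measurableSet_Ioc
  set J : ℝ → ℝ := fun α => ∫ x, (Kfun G α x) ^ 2 ∂μ with hJdef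
  have hJ : Tendsto J (nhdsWithin 0 (Ioi 0)) (nhds 0) := by
    have h0 : Tendsto J (nhdsWithin 0 (Ioi 0)) (nhds (∫ _x, (0:ℝ) ∂μ)) := by
      apply MeasureTheory.tendsto_integral_filter_of_dominated_convergence (bound := fun _ => (2 * M) ^ 2)
      · exact Eventually.of_forall fun α => (hKm α).pow 2
      · filter_upwards [eventually_mem_nhdsWithin] with α hα
        filter_upwards [hae_mem] with x hx
        have hb := K_unif hGc hM hα hx
        rw [Real.norm_eq_abs, abs_of_nonneg (sq_nonneg _), ← sq_abs]
        exact pow_le_pow_left₀ (abs_nonneg _) hb 2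
      · exact integrable_const _
      · filter_upwards [hae_mem] with x hx
        simpa using (K_tendsto hGc hM hx).pow 2
    simpa using h0
  have hKmem : ∀ α : ℝ, 0 < α → MemLp (Kfun G α) 2 μ := fun α hα =>
    MemLp.of_bound (hKm α) (2 * M)
      (hae_mem.mono fun x hx => by
        rw [Real.norm_eq_abs]; exact K_unif hGc hM hα hx)
  have heLp : ∀ α : ℝ, 0 < α → eLpNorm (Kfun G α) 2 μ
      = ENNReal.ofReal ((J α) ^ (2:ℝ)⁻¹) := by
    intro α hα
    have h := (hKmem α hα).eLpNorm_eq_integral_rpow_norm (by norm_num) (by norm_num)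
    have h2 : ((2:ENNReal)).toReal = (2:ℝ) := by norm_num
    rw [h, h2]
    congr 2
    apply MeasureTheory.integral_congr_ae
    refine ae_of_all _ fun x => ?_
    show ‖Kfun G α x‖ ^ (2:ℝ) = Kfun G α x ^ 2
    rw [Real.norm_eq_abs, show (2:ℝ) = ((2:ℕ):ℝ) by norm_num, Real.rpow_natCast, sq_abs]
  have hoJ : Tendsto (fun α => ENNReal.ofReal (J α ^ (2:ℝ)⁻¹))
      (nhdsWithin 0 (Ioi 0)) (nhds 0) := by
    have hc : Tendsto (fun α => J α ^ (2:ℝ)⁻¹) (nhdsWithin 0 (Ioi 0))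
        (nhds ((0:ℝ) ^ (2:ℝ)⁻¹)) :=
      ((Real.continuousAt_rpow_const 0 (2:ℝ)⁻¹ (Or.inr (by norm_num))).tendsto).comp hJ
    rw [Real.zero_rpow (by norm_num)] at hc
    have := (ENNReal.continuous_ofReal.tendsto 0).comp hc
    simpa [Function.comp_def] using this
  refine Tendsto.congr' ?_ hoJ
  filter_upwards [eventually_mem_nhdsWithin] with α hα
  rw [← heLp α hα]
  apply eLpNorm_congr_ae
  filter_upwards [hae_mem, hae_ne] with x hx hx1
  exact (pointwise_eq hf hf0 hα ⟨hx.1, lt_of_le_of_ne hx.2 hx1⟩).symm
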